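/- Let N ≥ 2 and let h_A, h_B : [0,1] → ℝ be given by h_A(x) = x·√(2·log(1/x)) for x ∈ (0,1] with h_A(0) = 0, and h_B(x) = x·√(2·log(1/x)) − √(π/2)·erf(√(log(1/x))) + x·(N−1)·√(π/2) for x ∈ (0,1] with h_B(0) = −√(π/2). Set H_A(w) = Σ_{i=1}^N h_A(w_i) and H_B(w) = Σ_{i=1}^N h_B(w_i). Then for every w in the probability simplex Δ_N, every subset S ⊆ [N] with |S| = N₀ ≥ 1, and every p ∈ (0,1): 0 ≤ H_B(w) ≤ H_A(w) ≤ √(2·log N₀) + (1/√(e·(1−p)))·Σ_{i∉S} w_i^p + 𝟙{N₀ = 1}·√2·Σ_{i∉S} √(w_i). -/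

import Mathlib

/-- The error function `erf(z) = (2/√π)∫_0^z e^{-u²} du`. -/
noncomputable def erf (z : ℝ) : ℝ :=
  2 / Real.sqrt Real.pi * ∫ u in (0 : ℝ)..z, Real.exp (-u ^ 2)

/-- `h_A(x) = x·√(2·log(1/x))` for `x ∈ (0,1]`, with `h_A(0) = 0`. -/
noncomputable def hA (x : ℝ) : ℝ :=
  if x = 0 then 0 else x * Real.sqrt (2 * Real.log (1 / x))

/-- `h_B(x) = x·√(2·log(1/x)) − √(π/2)·erf(√(log(1/x))) + x·(N−1)·√(π/2)` for `x ∈ (0,1]`,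
with `h_B(0) = −√(π/2)`. -/
noncomputable def hB (N : ℕ) (x : ℝ) : ℝ :=
  if x = 0 then -Real.sqrt (Real.pi / 2)
  else x * Real.sqrt (2 * Real.log (1 / x))
    - Real.sqrt (Real.pi / 2) * erf (Real.sqrt (Real.log (1 / x)))
    + x * ((N : ℝ) - 1) * Real.sqrt (Real.pi / 2)

noncomputable def HA {N : ℕ} (w : Fin N → ℝ) : ℝ := ∑ i, hA (w i)

noncomputable def HB {N : ℕ} (w : Fin N → ℝ) : ℝ := ∑ i, hB N (w i)

section Stmt12Helpers
open MeasureTheory Set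

lemma gauss_integrable : Integrable fun u : ℝ => Real.exp (-u^2) := by
  simpa using integrable_exp_neg_mul_sq (b := (1:ℝ)) one_pos

lemma gauss_Ioi0 : ∫ x in Ioi (0:ℝ), Real.exp (-x^2) = Real.sqrt Real.pi / 2 := by
  simpa using integral_gaussian_Ioi 1

lemma tail_eq (t : ℝ) :
    ∫ x in Ioi t, Real.exp (-x^2) = ∫ x in Ioi (0:ℝ), Real.exp (-(x+t)^2) := by
  have h := (measurePreserving_add_right volume t).setIntegral_preimage_emb
      (measurableEmbedding_addRight t) (fun x => Real.exp (-x^2)) (Ioi t)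
  rw [← h]; congr 1; ext x; simp [Set.mem_preimage, Set.mem_Ioi]

lemma tail_nonneg (t : ℝ) : 0 ≤ ∫ x in Ioi t, Real.exp (-x^2) :=
  setIntegral_nonneg measurableSet_Ioi fun x _ => (Real.exp_pos _).le

lemma tail_le {t : ℝ} (ht : 0 ≤ t) :
    ∫ x in Ioi t, Real.exp (-x^2) ≤ Real.exp (-t^2) * (Real.sqrt Real.pi / 2) := by
  rw [tail_eq]
  have h1 : ∫ x in Ioi (0:ℝ), Real.exp (-(x+t)^2)
      ≤ ∫ x in Ioi (0:ℝ), Real.exp (-t^2) * Real.exp (-x^2) := by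
    apply setIntegral_mono_on
    · exact (gauss_integrable.comp_add_right t).integrableOn
    · exact (gauss_integrable.const_mul _).integrableOn
    · exact measurableSet_Ioi
    · intro x hx
      rw [← Real.exp_add]
      apply Real.exp_le_exp.2
      nlinarith [mem_Ioi.1 hx]
  rwa [integral_const_mul, gauss_Ioi0] at h1

lemma split {t : ℝ} (ht : 0 ≤ t) :
    (∫ u in (0:ℝ)..t, Real.exp (-u^2)) + ∫ x in Ioi t, Real.exp (-x^2)
      = Real.sqrt Real.pi / 2 := by
  rw [intervalIntegral.integral_of_le ht, ← gauss_Ioi0, ← Set.Ioc_union_Ioi_eq_Ioi ht,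
    setIntegral_union (Set.Ioc_disjoint_Ioi le_rfl) measurableSet_Ioi
      gauss_integrable.integrableOn gauss_integrable.integrableOn]

lemma Ig_hasDerivAt (t : ℝ) :
    HasDerivAt (fun s : ℝ => ∫ u in (0:ℝ)..s, Real.exp (-u^2)) (Real.exp (-t^2)) t := by
  have hc : Continuous fun u : ℝ => Real.exp (-u^2) := by continuity
  exact (hc.integral_hasStrictDerivAt 0 t).hasDerivAt

lemma tail_ge {t : ℝ} (ht : 0 ≤ t) :
    Real.exp (-t^2) * (Real.sqrt Real.pi / 2 - t) ≤ ∫ x in Ioi t, Real.exp (-x^2) := by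
  set c : ℝ := Real.sqrt Real.pi / 2 with hc
  rcases le_or_gt c t with h | h
  · have : Real.exp (-t^2) * (c - t) ≤ 0 :=
      mul_nonpos_of_nonneg_of_nonpos (Real.exp_pos _).le (by linarith)
    exact this.trans (tail_nonneg t)
  · set F : ℝ → ℝ := fun s => (c - ∫ u in (0:ℝ)..s, Real.exp (-u^2))
      - Real.exp (-s^2) * (c - s) with hF
    have hFd : ∀ s : ℝ, HasDerivAt F (2 * s * Real.exp (-s^2) * (c - s)) s := by
      intro s
      have h1 := Ig_hasDerivAt s
      have h2 : HasDerivAt (fun s : ℝ => Real.exp (-s^2)) (Real.exp (-s^2) * (-(2*s))) s := by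
        have hsq : HasDerivAt (fun s : ℝ => -s^2) (-(2*s)) s := by
          simpa using ((hasDerivAt_pow 2 s).fun_neg)
        exact (Real.hasDerivAt_exp (-s^2)).comp s hsq
      have h3 : HasDerivAt (fun s : ℝ => c - s) (-1) s :=
        by simpa using (hasDerivAt_const s c).fun_sub (hasDerivAt_id s)
      have h4 : HasDerivAt (fun s : ℝ => c - ∫ u in (0:ℝ)..s, Real.exp (-u^2))
          (-Real.exp (-s^2)) s := by
        simpa using (hasDerivAt_const s c).fun_sub h1
      have := h4.fun_sub (h2.fun_mul h3)
      exact this.congr_deriv (by ring)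
    have mono : MonotoneOn F (Icc 0 c) := by
      apply monotoneOn_of_deriv_nonneg (convex_Icc 0 c)
      · exact fun x _ => (hFd x).differentiableAt.continuousAt.continuousWithinAt
      · exact fun x _ => (hFd x).differentiableAt.differentiableWithinAt
      · intro x hx
        rw [interior_Icc] at hx
        rw [(hFd x).deriv]
        have := hx.1; have := hx.2
        have : (0:ℝ) ≤ 2 * x := by linarith [hx.1]
        apply mul_nonneg (mul_nonneg this (Real.exp_pos _).le)
        linarith [hx.2]
    have hc0 : (0:ℝ) ≤ c := by positivity
    have hF0 : F 0 = 0 := by simp [hF]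
    have hFt : 0 ≤ F t := by
      rw [← hF0]
      exact mono (left_mem_Icc.2 hc0) ⟨ht, h.le⟩ ht
    have hsplit := split ht
    have : (∫ x in Ioi t, Real.exp (-x^2)) = c - ∫ u in (0:ℝ)..t, Real.exp (-u^2) := by
      rw [hc]; linarith
    rw [this]
    simp only [hF] at hFt
    linarith

lemma sqrt_pi_pos : 0 < Real.sqrt Real.pi := Real.sqrt_pos.2 Real.pi_pos

lemma sqrtpi_erf (t : ℝ) :
    Real.sqrt Real.pi * erf t = 2 * ∫ u in (0:ℝ)..t, Real.exp (-u^2) := by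
  rw [erf]
  field_simp

-- note erf's integrand is `-u ^ 2` same as `-u^2`, fine.

lemma log_one_div_nonneg {x : ℝ} (h0 : 0 < x) (h1 : x ≤ 1) : 0 ≤ Real.log (1/x) :=
  Real.log_nonneg (one_le_one_div h0 h1)

lemma exp_neg_log {x : ℝ} (h0 : 0 < x) : Real.exp (-Real.log (1/x)) = x := by
  rw [one_div, Real.log_inv, neg_neg, Real.exp_log h0]

lemma hB_ge (N : ℕ) {x : ℝ} (hx : x ∈ Set.Icc (0:ℝ) 1) :
    Real.sqrt (Real.pi/2) * (N * x - 1) ≤ hB N x := by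
  rcases eq_or_lt_of_le hx.1 with h0 | h0
  · rw [hB, if_pos h0.symm, ← h0]
    simp
  · rw [hB, if_neg (ne_of_gt h0)]
    have hL : 0 ≤ Real.log (1/x) := log_one_div_nonneg h0 hx.2
    set t := Real.sqrt (Real.log (1/x)) with htdef
    have ht : 0 ≤ t := Real.sqrt_nonneg _
    have ht2 : t^2 = Real.log (1/x) := Real.sq_sqrt hL
    have hxe : x = Real.exp (-t^2) := by rw [ht2, exp_neg_log h0]
    have hs2 : Real.sqrt 2 * Real.sqrt 2 = 2 := Real.mul_self_sqrt (by norm_num)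
    have hs2pos : (0:ℝ) < Real.sqrt 2 := by positivity
    have hπ2 : Real.sqrt (Real.pi/2) * Real.sqrt 2 = Real.sqrt Real.pi := by
      rw [← Real.sqrt_mul (by positivity : (0:ℝ) ≤ Real.pi/2)]
      norm_num
    have h2L : Real.sqrt (2 * Real.log (1/x)) = Real.sqrt 2 * t := by
      rw [htdef, ← Real.sqrt_mul (by norm_num)]
    have herf := sqrtpi_erf t
    set Ig := ∫ u in (0:ℝ)..t, Real.exp (-u^2) with hIg
    have hkey : x * (Real.sqrt Real.pi/2 - t) ≤ Real.sqrt Real.pi/2 - Ig := by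
      have h1 := tail_ge ht
      have h2 := split ht
      rw [← hxe] at h1
      rw [← hIg] at h2
      linarith
    rw [h2L, ← sub_nonneg]
    have hfact : (x * (Real.sqrt 2 * t) - Real.sqrt (Real.pi/2) * erf t
          + x * ((N:ℝ) - 1) * Real.sqrt (Real.pi/2)
          - Real.sqrt (Real.pi/2) * ((N:ℝ) * x - 1)) * Real.sqrt 2
        = 2*x*t - 2*Ig + Real.sqrt Real.pi * (1 - x) := by
      linear_combination (x*t) * hs2 + (1 - x - erf t) * hπ2 - herf
    have hQ : 0 ≤ 2*x*t - 2*Ig + Real.sqrt Real.pi * (1 - x) := by linarith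
    nlinarith [hfact, hQ, hs2pos]

lemma erf_ge {t : ℝ} (ht : 0 ≤ t) : 1 - Real.exp (-t^2) ≤ erf t := by
  have h1 := tail_le ht
  have h2 := split ht
  have h3 := sqrtpi_erf t
  have hπ := sqrt_pi_pos
  rw [← sub_nonneg]
  have : (erf t - (1 - Real.exp (-t^2))) * Real.sqrt Real.pi
      = 2 * (∫ u in (0:ℝ)..t, Real.exp (-u^2))
        - (1 - Real.exp (-t^2)) * Real.sqrt Real.pi := by
    linear_combination h3
  nlinarith [this]

lemma hA_ge_hB (N : ℕ) {x : ℝ} (hx : x ∈ Set.Icc (0:ℝ) 1) :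
    hB N x + Real.sqrt (Real.pi/2) * (1 - N * x) ≤ hA x := by
  rcases eq_or_lt_of_le hx.1 with h0 | h0
  · rw [hB, hA, if_pos h0.symm, if_pos h0.symm, ← h0]
    simp
  · rw [hB, hA, if_neg (ne_of_gt h0), if_neg (ne_of_gt h0)]
    have hL : 0 ≤ Real.log (1/x) := log_one_div_nonneg h0 hx.2
    set t := Real.sqrt (Real.log (1/x)) with htdef
    have ht : 0 ≤ t := Real.sqrt_nonneg _
    have ht2 : t^2 = Real.log (1/x) := Real.sq_sqrt hL
    have hxe : Real.exp (-t^2) = x := by rw [ht2, exp_neg_log h0]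
    have h1 : 1 - x ≤ erf t := by rw [← hxe]; exact erf_ge ht
    have hA0 : (0:ℝ) ≤ Real.sqrt (Real.pi/2) := Real.sqrt_nonneg _
    nlinarith [mul_le_mul_of_nonneg_left h1 hA0]

lemma hA_nonneg {x : ℝ} (hx : x ∈ Set.Icc (0:ℝ) 1) : 0 ≤ hA x := by
  rcases eq_or_lt_of_le hx.1 with h0 | h0
  · rw [hA, if_pos h0.symm]
  · rw [hA, if_neg (ne_of_gt h0)]
    exact mul_nonneg h0.le (Real.sqrt_nonneg _)

lemma hA_eq {x : ℝ} (hx : x ∈ Set.Icc (0:ℝ) 1) :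
    hA x = Real.sqrt x * Real.sqrt (2 * (x * Real.log (1/x))) := by
  rcases eq_or_lt_of_le hx.1 with h0 | h0
  · rw [hA, if_pos h0.symm, ← h0]
    simp
  · rw [hA, if_neg (ne_of_gt h0)]
    have hL : 0 ≤ Real.log (1/x) := log_one_div_nonneg h0 hx.2
    have : Real.sqrt x * Real.sqrt (2*(x*Real.log (1/x))) = x * Real.sqrt (2*Real.log (1/x)) := by
      rw [← Real.sqrt_mul hx.1,
        show x * (2*(x*Real.log (1/x))) = x^2 * (2 * Real.log (1/x)) by ring,
        Real.sqrt_mul (sq_nonneg x), Real.sqrt_sq h0.le]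
    rw [this]

lemma xlog_nonneg {x : ℝ} (hx : x ∈ Set.Icc (0:ℝ) 1) : 0 ≤ x * Real.log (1/x) := by
  rcases eq_or_lt_of_le hx.1 with h0 | h0
  · rw [← h0]; simp
  · exact mul_nonneg h0.le (log_one_div_nonneg h0 hx.2)

lemma xlog_le {x : ℝ} (hx : x ∈ Set.Icc (0:ℝ) 1) {N₀ : ℕ} (hN₀ : 1 ≤ N₀) :
    x * Real.log (1/x) ≤ x * Real.log N₀ + (1/(N₀:ℝ) - x) := by
  have hN0 : (0:ℝ) < N₀ := by exact_mod_cast hN₀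
  rcases eq_or_lt_of_le hx.1 with h0 | h0
  · rw [← h0]; simp
  · have hsplit : Real.log (1/x) = Real.log N₀ + Real.log (1/((N₀:ℝ)*x)) := by
      rw [← Real.log_mul (ne_of_gt hN0) (by positivity)]
      congr 1
      field_simp
    have h1 : Real.log (1/((N₀:ℝ)*x)) ≤ 1/((N₀:ℝ)*x) - 1 :=
      Real.log_le_sub_one_of_pos (by positivity)
    have h2 : x * Real.log (1/((N₀:ℝ)*x)) ≤ 1/(N₀:ℝ) - x := by
      have := mul_le_mul_of_nonneg_left h1 h0.le
      have hxx : x * (1/((N₀:ℝ)*x)) = 1/(N₀:ℝ) := by field_simp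
      nlinarith
    rw [hsplit]
    nlinarith

lemma hA_le_sqrt2 {x : ℝ} (hx : x ∈ Set.Icc (0:ℝ) 1) :
    hA x ≤ Real.sqrt 2 * Real.sqrt (1 - x) := by
  rcases eq_or_lt_of_le hx.1 with h0 | h0
  · rw [hA, if_pos h0.symm]; positivity
  · rw [hA, if_neg (ne_of_gt h0)]
    have hL : 0 ≤ Real.log (1/x) := log_one_div_nonneg h0 hx.2
    have hlog : Real.log (1/x) ≤ 1/x - 1 := Real.log_le_sub_one_of_pos (by positivity)
    have hx1 : x * (1/x) = 1 := by field_simp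
    have key : x^2 * (2 * Real.log (1/x)) ≤ 2 * (1 - x) := by
      have h5 : x^2 * Real.log (1/x) ≤ x^2 * (1/x - 1) :=
        mul_le_mul_of_nonneg_left hlog (sq_nonneg x)
      have h6 : x^2 * (1/x - 1) = x - x^2 := by field_simp
      nlinarith [sq_nonneg (1-x), hx.2]
    calc x * Real.sqrt (2 * Real.log (1/x))
        = Real.sqrt (x^2 * (2 * Real.log (1/x))) := by
          rw [Real.sqrt_mul (sq_nonneg x), Real.sqrt_sq h0.le]
      _ ≤ Real.sqrt (2 * (1 - x)) := Real.sqrt_le_sqrt key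
      _ = Real.sqrt 2 * Real.sqrt (1 - x) := Real.sqrt_mul (by norm_num) _

lemma hA_le_rpow {x p : ℝ} (hx : x ∈ Set.Icc (0:ℝ) 1) (hp : p ∈ Set.Ioo (0:ℝ) 1) :
    hA x ≤ 1 / Real.sqrt (Real.exp 1 * (1-p)) * x ^ p := by
  rcases eq_or_lt_of_le hx.1 with h0 | h0
  · rw [hA, if_pos h0.symm, ← h0, Real.zero_rpow (ne_of_gt hp.1), mul_zero]
  · rw [hA, if_neg (ne_of_gt h0)]
    set L := Real.log (1/x) with hLdef
    have hL : 0 ≤ L := log_one_div_nonneg h0 hx.2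
    have hq0 : 0 < 1 - p := by linarith [hp.2]
    have hxq : x ^ (1-p) = Real.exp (-((1-p)*L)) := by
      rw [Real.rpow_def_of_pos h0]
      congr 1
      rw [hLdef, one_div, Real.log_inv]
      ring
    have hsplit : x * Real.sqrt (2*L) = x ^ p * (x ^ (1-p) * Real.sqrt (2*L)) := by
      rw [← mul_assoc, ← Real.rpow_add h0]
      norm_num
    have hbound : x ^ (1-p) * Real.sqrt (2*L) ≤ 1 / Real.sqrt (Real.exp 1 * (1-p)) := by
      rw [hxq, one_div, ← Real.sqrt_inv]
      rw [Real.le_sqrt (by positivity) (by positivity)]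
      have hy : 0 ≤ 2*(1-p)*L := by positivity
      have hyexp : 2*(1-p)*L ≤ Real.exp (2*(1-p)*L - 1) := by
        have := Real.add_one_le_exp (2*(1-p)*L - 1)
        linarith
      have hsq : (Real.exp (-((1-p)*L)) * Real.sqrt (2*L))^2
          = Real.exp (-(2*(1-p)*L)) * (2*L) := by
        rw [mul_pow, Real.sq_sqrt (by positivity), sq, ← Real.exp_add]
        ring_nf
      rw [hsq, inv_eq_one_div, le_div_iff₀ (by positivity)]
      have h4 : Real.exp (-(2*(1-p)*L)) * (2*(1-p)*L) ≤ Real.exp (-1) := by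
        calc Real.exp (-(2*(1-p)*L)) * (2*(1-p)*L)
            ≤ Real.exp (-(2*(1-p)*L)) * Real.exp (2*(1-p)*L - 1) :=
              mul_le_mul_of_nonneg_left hyexp (Real.exp_pos _).le
          _ = Real.exp (-1) := by rw [← Real.exp_add]; ring_nf
      calc Real.exp (-(2*(1-p)*L)) * (2*L) * (Real.exp 1 * (1-p))
          = (Real.exp (-(2*(1-p)*L)) * (2*(1-p)*L)) * Real.exp 1 := by ring
        _ ≤ Real.exp (-1) * Real.exp 1 :=
            mul_le_mul_of_nonneg_right h4 (Real.exp_pos _).le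
        _ = 1 := by rw [← Real.exp_add]; norm_num
    calc x * Real.sqrt (2*L) = x ^ p * (x ^ (1-p) * Real.sqrt (2*L)) := hsplit
      _ ≤ x ^ p * (1 / Real.sqrt (Real.exp 1 * (1-p))) :=
          mul_le_mul_of_nonneg_left hbound (Real.rpow_nonneg hx.1 p)
      _ = 1 / Real.sqrt (Real.exp 1 * (1-p)) * x ^ p := by ring

lemma sqrt_sum_le {ι : Type*} (s : Finset ι) (f : ι → ℝ) (hf : ∀ i, 0 ≤ f i) :
    Real.sqrt (∑ i ∈ s, f i) ≤ ∑ i ∈ s, Real.sqrt (f i) := by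
  induction s using Finset.cons_induction with
  | empty => simp
  | cons a s ha ih =>
    rw [Finset.sum_cons, Finset.sum_cons]
    have hs : 0 ≤ ∑ i ∈ s, f i := Finset.sum_nonneg fun i _ => hf i
    have h1 : Real.sqrt (f a + ∑ i ∈ s, f i) ≤ Real.sqrt (f a) + Real.sqrt (∑ i ∈ s, f i) := by
      have hle : f a + ∑ i ∈ s, f i ≤ (Real.sqrt (f a) + Real.sqrt (∑ i ∈ s, f i))^2 := by
        have e1 := Real.sq_sqrt (hf a)
        have e2 := Real.sq_sqrt hs
        nlinarith [Real.sqrt_nonneg (f a), Real.sqrt_nonneg (∑ i ∈ s, f i)]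
      calc Real.sqrt (f a + ∑ i ∈ s, f i)
          ≤ Real.sqrt ((Real.sqrt (f a) + Real.sqrt (∑ i ∈ s, f i))^2) := Real.sqrt_le_sqrt hle
        _ = Real.sqrt (f a) + Real.sqrt (∑ i ∈ s, f i) := Real.sqrt_sq (by positivity)
    exact h1.trans (add_le_add_right ih _)

lemma bigS {N : ℕ} (w : Fin N → ℝ) (hw0 : ∀ i, 0 ≤ w i)
    (hwIcc : ∀ i, w i ∈ Set.Icc (0:ℝ) 1) (hw1 : ∑ i, w i = 1)
    (S : Finset (Fin N)) (N₀ : ℕ) (hS : S.card = N₀) (h2 : 2 ≤ N₀) :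
    ∑ i ∈ S, hA (w i) ≤ Real.sqrt (2 * Real.log N₀) := by
  set c := Real.log (N₀:ℝ) with hcdef
  have hc : (1:ℝ)/2 ≤ c := by
    have h1 : Real.log 2 ≤ c := by
      rw [hcdef]
      apply Real.log_le_log (by norm_num)
      exact_mod_cast h2
    have := Real.log_two_gt_d9
    linarith
  set s := ∑ i ∈ S, w i with hs
  have hs0 : 0 ≤ s := Finset.sum_nonneg fun i _ => hw0 i
  have hs1 : s ≤ 1 := by
    rw [hs, ← hw1]
    exact Finset.sum_le_sum_of_subset_of_nonneg (Finset.subset_univ S) fun i _ _ => hw0 i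
  have hN0 : (0:ℝ) < N₀ := by positivity
  have hent : ∑ i ∈ S, w i * Real.log (1 / w i) ≤ s * c + (1 - s) := by
    calc ∑ i ∈ S, w i * Real.log (1 / w i)
        ≤ ∑ i ∈ S, (w i * c + (1/(N₀:ℝ) - w i)) :=
          Finset.sum_le_sum fun i _ => xlog_le (hwIcc i) (by omega)
      _ = s * c + ((S.card : ℝ) * (1/(N₀:ℝ)) - s) := by
          rw [Finset.sum_add_distrib, Finset.sum_sub_distrib, Finset.sum_const,
            ← Finset.sum_mul, nsmul_eq_mul]
      _ = s * c + (1 - s) := by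
          rw [hS]
          field_simp
  have hCS : ∑ i ∈ S, hA (w i)
      ≤ Real.sqrt s * Real.sqrt (∑ i ∈ S, 2*(w i * Real.log (1/w i))) := by
    have h := Real.sum_sqrt_mul_sqrt_le S (f := fun i => w i)
      (g := fun i => 2*(w i * Real.log (1/w i)))
      (fun i => hw0 i) (fun i => by
        have := xlog_nonneg (hwIcc i); positivity)
    calc ∑ i ∈ S, hA (w i)
        = ∑ i ∈ S, Real.sqrt (w i) * Real.sqrt (2*(w i * Real.log (1/w i))) :=
          Finset.sum_congr rfl fun i _ => hA_eq (hwIcc i)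
      _ ≤ _ := h
  have h2sum : Real.sqrt (∑ i ∈ S, 2*(w i * Real.log (1/w i)))
      ≤ Real.sqrt (2*(s*c + (1-s))) := by
    apply Real.sqrt_le_sqrt
    rw [← Finset.mul_sum]
    linarith
  have hfinal : Real.sqrt s * Real.sqrt (2*(s*c+(1-s))) ≤ Real.sqrt (2*c) := by
    rw [← Real.sqrt_mul hs0]
    apply Real.sqrt_le_sqrt
    nlinarith [sq_nonneg (1-s),
      mul_nonneg (mul_nonneg (by linarith : (0:ℝ) ≤ 1 - s) (by linarith : (0:ℝ) ≤ 1 + s))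
        (by linarith : (0:ℝ) ≤ c - 1/2)]
  calc ∑ i ∈ S, hA (w i)
      ≤ Real.sqrt s * Real.sqrt (∑ i ∈ S, 2*(w i * Real.log (1/w i))) := hCS
    _ ≤ Real.sqrt s * Real.sqrt (2*(s*c+(1-s))) :=
        mul_le_mul_of_nonneg_left h2sum (Real.sqrt_nonneg s)
    _ ≤ Real.sqrt (2*c) := hfinal


end Stmt12Helpers


/-- for every `w` in the probability simplex `Δ_N` (`N ≥ 2`), every
`S ⊆ [N]` with `|S| = N₀ ≥ 1`, and every `p ∈ (0,1)`:
`0 ≤ H_B(w) ≤ H_A(w) ≤ √(2·log N₀) + (1/√(e(1−p)))·Σ_{i∉S} w_iᵖ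
  + 𝟙{N₀ = 1}·√2·Σ_{i∉S} √(w_i)`. -/
theorem stmt12 (N : ℕ) (hN : 2 ≤ N) (w : Fin N → ℝ) (hw : w ∈ stdSimplex ℝ (Fin N))
    (S : Finset (Fin N)) (N₀ : ℕ) (hS : S.card = N₀) (hN₀ : 1 ≤ N₀)
    (p : ℝ) (hp : p ∈ Set.Ioo (0 : ℝ) 1) :
    0 ≤ HB w ∧ HB w ≤ HA w ∧
      HA w ≤ Real.sqrt (2 * Real.log N₀)
        + 1 / Real.sqrt (Real.exp 1 * (1 - p)) * ∑ i ∈ Sᶜ, w i ^ p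
        + (if N₀ = 1 then 1 else 0) * Real.sqrt 2 * ∑ i ∈ Sᶜ, Real.sqrt (w i) := by
  obtain ⟨hw0, hw1⟩ := hw
  have hwIcc : ∀ i, w i ∈ Set.Icc (0:ℝ) 1 := fun i =>
    ⟨hw0 i, by
      calc w i ≤ ∑ j, w j := Finset.single_le_sum (fun j _ => hw0 j) (Finset.mem_univ i)
        _ = 1 := hw1⟩
  have hsum0 : ∑ i, (Real.sqrt (Real.pi/2) * ((N:ℝ) * w i - 1)) = 0 := by
    rw [← Finset.mul_sum]
    have h : ∑ i, ((N:ℝ) * w i - 1) = 0 := by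
      rw [Finset.sum_sub_distrib, ← Finset.mul_sum, hw1]
      simp
    rw [h, mul_zero]
  have hsum1 : ∑ i, (Real.sqrt (Real.pi/2) * (1 - (N:ℝ) * w i)) = 0 := by
    rw [← Finset.mul_sum]
    have h : ∑ i, (1 - (N:ℝ) * w i) = 0 := by
      rw [Finset.sum_sub_distrib, ← Finset.mul_sum, hw1]
      simp
    rw [h, mul_zero]
  refine ⟨?_, ?_, ?_⟩
  · calc (0:ℝ) = ∑ i, (Real.sqrt (Real.pi/2) * ((N:ℝ) * w i - 1)) := hsum0.symm
      _ ≤ ∑ i, hB N (w i) := Finset.sum_le_sum fun i _ => hB_ge N (hwIcc i)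
      _ = HB w := rfl
  · have h := Finset.sum_le_sum (s := Finset.univ)
      (fun i _ => hA_ge_hB N (hwIcc i) : ∀ i ∈ Finset.univ,
        hB N (w i) + Real.sqrt (Real.pi/2) * (1 - (N:ℝ) * w i) ≤ hA (w i))
    rw [Finset.sum_add_distrib, hsum1, add_zero] at h
    exact h
  · have hcompl : ∑ i ∈ Sᶜ, hA (w i)
        ≤ 1 / Real.sqrt (Real.exp 1 * (1-p)) * ∑ i ∈ Sᶜ, w i ^ p := by
      rw [Finset.mul_sum]
      exact Finset.sum_le_sum fun i _ => hA_le_rpow (hwIcc i) hp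
    have hHA : HA w = ∑ i ∈ S, hA (w i) + ∑ i ∈ Sᶜ, hA (w i) :=
      (Finset.sum_add_sum_compl S _).symm
    rcases eq_or_lt_of_le hN₀ with h1 | h1
    · -- N₀ = 1
      obtain ⟨i₀, hi₀⟩ := Finset.card_eq_one.1 (by rw [hS, ← h1])
      subst hi₀
      rw [if_pos h1.symm, one_mul]
      have hsS : ∑ i ∈ ({i₀} : Finset (Fin N)), hA (w i) = hA (w i₀) := by
        rw [Finset.sum_singleton]
      have hrest : 1 - w i₀ = ∑ i ∈ ({i₀} : Finset (Fin N))ᶜ, w i := by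
        have h := Finset.sum_add_sum_compl ({i₀} : Finset (Fin N)) w
        rw [Finset.sum_singleton, hw1] at h
        linarith
      have h4 : hA (w i₀) ≤ Real.sqrt 2 * ∑ i ∈ ({i₀} : Finset (Fin N))ᶜ, Real.sqrt (w i) := by
        refine (hA_le_sqrt2 (hwIcc i₀)).trans ?_
        apply mul_le_mul_of_nonneg_left _ (Real.sqrt_nonneg 2)
        rw [hrest]
        exact sqrt_sum_le _ w hw0
      have h5 : 0 ≤ Real.sqrt (2 * Real.log (N₀:ℝ)) := Real.sqrt_nonneg _
      rw [hHA, hsS]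
      linarith
    · -- N₀ ≥ 2
      rw [if_neg (by omega), zero_mul, zero_mul, add_zero]
      have hmain := bigS w hw0 hwIcc hw1 S N₀ hS h1
      rw [hHA]
      linarith
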